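/- Let $U = \Delta^2$ be the unit bidisk in $\mathbb{C}^2$, let $\phi(z) = \log|z_1 - z_2|^2$, and let $f$ be the holomorphic function on $V = \{z_1 z_2 = 0\} \cap U$ defined by $f = z_1$ on $\{z_2 = 0\}$ and $f = 0$ on $\{z_1 = 0\}$. Then there is no holomorphic function $H$ on $U$ with $H|_V = f$ and $\int_U |H|^2 e^{-\phi}\, d\lambda < \infty$. Indeed, any extension must have the form $H = z_1 G$ with $G$ holomorphic, finiteness of the weighted norm forces $G = 0$ on $\{z_1 = z_2\}$, and then $H$ vanishes to order $\geq 2$ at the origin, contradicting $\partial H/\partial z_1(0) = 1$. -/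

import Mathlib

open MeasureTheory Metric Complex Set

open scoped ENNReal NNReal

lemma not_integrableOn_inv_norm_sq (c : ℂ) {ε : ℝ} (hε : 0 < ε) :
    ¬ IntegrableOn (fun w : ℂ => 1 / ‖w - c‖ ^ 2) (ball c ε) := by
  intro h
  set f : ℂ → ℝ := fun w => 1 / ‖w - c‖ ^ 2 with hf
  have hfin : ∫⁻ w in ball c ε, ENNReal.ofReal (f w) < ⊤ := by
    have h2 := h.2
    rw [HasFiniteIntegral] at h2
    refine lt_of_le_of_lt (lintegral_mono fun w => ?_) h2
    rw [Real.enorm_eq_ofReal (by positivity)]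
  set A : ℕ → Set ℂ := fun n => ball c (ε / 2 ^ n) \ ball c (ε / 2 ^ (n + 1)) with hA
  have hanti : ∀ {m n : ℕ}, m ≤ n → ε / 2 ^ n ≤ ε / 2 ^ m := by
    intro m n h
    exact div_le_div_of_nonneg_left hε.le (by positivity)
      (pow_le_pow_right₀ one_le_two h)
  have hmeas : ∀ n, MeasurableSet (A n) := fun n =>
    measurableSet_ball.diff measurableSet_ball
  have hsub : ∀ n, A n ⊆ ball c ε := fun n =>
    diff_subset.trans (ball_subset_ball (by simpa using hanti (Nat.zero_le n)))
  have hdisj : Pairwise (Function.onFun Disjoint A) := by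
    have key : ∀ m n : ℕ, m < n → Disjoint (A m) (A n) := by
      intro m n hlt
      refine Set.disjoint_left.mpr fun w hwm hwn => ?_
      have h1 : ε / 2 ^ (m + 1) ≤ dist w c := by
        simpa [Metric.mem_ball, not_lt] using hwm.2
      have h2 : dist w c < ε / 2 ^ n := hwn.1
      have h3 : ε / 2 ^ n ≤ ε / 2 ^ (m + 1) := hanti (by omega)
      linarith
    intro m n hmn
    rcases lt_or_gt_of_ne hmn with h | h
    · exact key m n h
    · exact (key n m h).symm
  have hAn : ∀ n, ENNReal.ofReal (3 / 4) * (NNReal.pi : ℝ≥0∞) ≤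
      ∫⁻ w in A n, ENNReal.ofReal (f w) := by
    intro n
    set r : ℝ := ε / 2 ^ n with hr
    have hr0 : 0 < r := by positivity
    have hvol : ENNReal.ofReal (3 / 4 * r ^ 2) * (NNReal.pi : ℝ≥0∞) ≤ volume (A n) := by
      have hsub' : ball c (ε / 2 ^ (n + 1)) ⊆ ball c r :=
        ball_subset_ball (hanti n.le_succ)
      have h21 : ε / 2 ^ (n + 1) = r / 2 := by rw [hr]; ring
      rw [hA]
      rw [measure_diff hsub' measurableSet_ball.nullMeasurableSet measure_ball_lt_top.ne,
        Complex.volume_ball, Complex.volume_ball, h21,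
        ← ENNReal.ofReal_pow hr0.le, ← ENNReal.ofReal_pow (by positivity : (0:ℝ) ≤ r / 2),
        ← ENNReal.sub_mul (fun _ _ => ENNReal.coe_ne_top),
        ← ENNReal.ofReal_sub _ (by positivity)]
      gcongr
      nlinarith [sq_nonneg r]
    calc ENNReal.ofReal (3 / 4) * (NNReal.pi : ℝ≥0∞)
        = ENNReal.ofReal (1 / r ^ 2) * (ENNReal.ofReal (3 / 4 * r ^ 2) * (NNReal.pi : ℝ≥0∞)) := by
          rw [← mul_assoc, ← ENNReal.ofReal_mul (by positivity)]
          congr 2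
          field_simp
      _ ≤ ENNReal.ofReal (1 / r ^ 2) * volume (A n) := mul_le_mul_right hvol _
      _ = ∫⁻ _ in A n, ENNReal.ofReal (1 / r ^ 2) := (setLIntegral_const _ _).symm
      _ ≤ ∫⁻ w in A n, ENNReal.ofReal (f w) := by
          refine setLIntegral_mono' (hmeas n) fun w hw => ?_
          apply ENNReal.ofReal_le_ofReal
          have hlt : ‖w - c‖ < r := by
            have := hw.1
            rwa [Metric.mem_ball, dist_eq_norm] at this
          have hge : ε / 2 ^ (n + 1) ≤ ‖w - c‖ := by
            have := hw.2
            simpa [Metric.mem_ball, not_lt, dist_eq_norm] using this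
          have hpos : 0 < ‖w - c‖ := lt_of_lt_of_le (by positivity) hge
          simp only [hf]
          have h2 : ‖w - c‖ ^ 2 ≤ r ^ 2 := by nlinarith
          exact one_div_le_one_div_of_le (by positivity) h2
  have htop : (⊤ : ℝ≥0∞) ≤ ∫⁻ w in ball c ε, ENNReal.ofReal (f w) := by
    have hc : ENNReal.ofReal (3 / 4) * (NNReal.pi : ℝ≥0∞) ≠ 0 := by
      apply mul_ne_zero
      · simp only [ne_eq, ENNReal.ofReal_eq_zero, not_le]
        norm_num
      · rw [ne_eq, ENNReal.coe_eq_zero]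
        exact NNReal.pi_ne_zero
    calc (⊤ : ℝ≥0∞) = ∑' _ : ℕ, ENNReal.ofReal (3 / 4) * (NNReal.pi : ℝ≥0∞) :=
          (ENNReal.tsum_const_eq_top_of_ne_zero hc).symm
      _ ≤ ∑' n, ∫⁻ w in A n, ENNReal.ofReal (f w) := ENNReal.tsum_le_tsum hAn
      _ = ∫⁻ w in ⋃ n, A n, ENNReal.ofReal (f w) := (lintegral_iUnion hmeas hdisj _).symm
      _ ≤ ∫⁻ w in ball c ε, ENNReal.ofReal (f w) :=
          lintegral_mono_set (iUnion_subset hsub)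
  exact lt_irrefl _ (htop.trans_lt hfin)

/-- Claim 3 (Ohsawa's example): with weight `φ = log|z₁ - z₂|²` on the unit bidisk,
the function on `V = {z₁ z₂ = 0}` equal to `z₁` on `{z₂ = 0}` and `0` on `{z₁ = 0}`
admits no holomorphic extension `H` with `∫_U |H|² e^{-φ} dλ < ∞`. -/
theorem statement6 :
    ¬ ∃ H : ℂ × ℂ → ℂ,
      DifferentiableOn ℂ H (ball (0:ℂ) 1 ×ˢ ball (0:ℂ) 1) ∧
      (∀ z₁ ∈ ball (0:ℂ) 1, H (z₁, 0) = z₁) ∧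
      (∀ z₂ ∈ ball (0:ℂ) 1, H (0, z₂) = 0) ∧
      IntegrableOn (fun z : ℂ × ℂ => ‖H z‖ ^ 2 / ‖z.1 - z.2‖ ^ 2)
        (ball (0:ℂ) 1 ×ˢ ball (0:ℂ) 1) := by
  rintro ⟨H, hH, h1, h2, hInt⟩
  set U : Set (ℂ × ℂ) := ball (0:ℂ) 1 ×ˢ ball (0:ℂ) 1 with hU
  have hUopen : IsOpen U := isOpen_ball.prod isOpen_ball
  -- Step 1: the weighted integrability forces `H` to vanish on the diagonal.
  have hdiag : ∀ a ∈ ball (0:ℂ) 1, H (a, a) = 0 := by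
    intro a ha
    by_contra hne
    have haU : (a, a) ∈ U := ⟨ha, ha⟩
    have hcont : ContinuousAt H (a, a) :=
      (hH.differentiableAt (hUopen.mem_nhds haU)).continuousAt
    set m : ℝ := ‖H (a, a)‖ / 2 with hm
    have hnorm_pos : 0 < ‖H (a, a)‖ := norm_pos_iff.mpr hne
    have hm0 : 0 < m := by positivity
    have hev : ∀ᶠ z in nhds (a, a), m < ‖H z‖ ∧ z ∈ U := by
      refine (hcont.norm.eventually (eventually_gt_nhds ?_)).and (hUopen.eventually_mem haU)
      rw [hm]; linarith
    obtain ⟨r, hr0, hrball⟩ := Metric.eventually_nhds_iff_ball.mp hev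
    have hprod : (ball a r ×ˢ ball a r : Set (ℂ × ℂ)) = ball (a, a) r := ball_prod_same a a r
    have hInt2 : IntegrableOn (fun z : ℂ × ℂ => ‖H z‖ ^ 2 / ‖z.1 - z.2‖ ^ 2)
        (ball a r ×ˢ ball a r) := by
      apply hInt.mono_set
      rw [hprod]
      intro z hz
      exact (hrball z hz).2
    have hg : IntegrableOn (fun z : ℂ × ℂ => m ^ 2 * (1 / ‖z.1 - z.2‖ ^ 2))
        (ball a r ×ˢ ball a r) := by
      refine Integrable.mono' hInt2 ?_ ?_
      · exact (measurable_const.mul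
          ((measurable_const.div
            (((measurable_fst.sub measurable_snd).norm).pow measurable_const)))).aestronglyMeasurable
      · filter_upwards [ae_restrict_mem (measurableSet_ball.prod measurableSet_ball)] with z hz
        have hmz : m ≤ ‖H z‖ := (hrball z (by rwa [← hprod])).1.le
        rw [Real.norm_eq_abs,
          _root_.abs_of_nonneg (by positivity : (0:ℝ) ≤ m ^ 2 * (1 / ‖z.1 - z.2‖ ^ 2)), mul_one_div]
        exact div_le_div_of_nonneg_right (pow_le_pow_left₀ hm0.le hmz 2) (by positivity)
    have hg2 : IntegrableOn (fun z : ℂ × ℂ => 1 / ‖z.1 - z.2‖ ^ 2)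
        (ball a r ×ˢ ball a r) := by
      have h' := hg.const_mul ((m ^ 2)⁻¹)
      have hm2 : (m : ℝ) ^ 2 ≠ 0 := by positivity
      simpa [IntegrableOn, ← mul_assoc, inv_mul_cancel₀ hm2] using h'
    rw [IntegrableOn, Measure.volume_eq_prod, ← Measure.prod_restrict] at hg2
    have hae := hg2.prod_right_ae
    haveI : (ae (volume.restrict (ball a r))).NeBot := by
      refine ae_neBot.mpr ?_
      rw [ne_eq, Measure.restrict_eq_zero]
      exact (measure_ball_pos volume a hr0).ne'
    obtain ⟨x, hxInt, hx⟩ := (hae.and (ae_restrict_mem measurableSet_ball)).exists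
    have hε : 0 < r - dist x a := by
      rw [mem_ball] at hx
      linarith
    refine not_integrableOn_inv_norm_sq x hε ?_
    have hmono : IntegrableOn (fun y : ℂ => 1 / ‖(x, y).1 - (x, y).2‖ ^ 2)
        (ball x (r - dist x a)) := by
      refine IntegrableOn.mono_set hxInt ?_
      exact ball_subset_ball' (by linarith)
    simpa [norm_sub_rev] using hmono
  -- Step 2: derivative computation at the origin yields a contradiction.
  have h00 : ((0:ℂ), (0:ℂ)) ∈ U := ⟨mem_ball_self one_pos, mem_ball_self one_pos⟩
  have hdiff : DifferentiableAt ℂ H (0, 0) := hH.differentiableAt (hUopen.mem_nhds h00)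
  have hL := hdiff.hasFDerivAt
  set L := fderiv ℂ H (0, 0) with hLdef
  have hball : ball (0:ℂ) 1 ∈ nhds (0:ℂ) := isOpen_ball.mem_nhds (mem_ball_self one_pos)
  -- L (1,0) = 1
  have hu : HasDerivAt (fun w : ℂ => H (w, 0)) (L (1, 0)) 0 := by
    have h' : HasDerivAt (fun w : ℂ => ((w, 0) : ℂ × ℂ)) ((1 : ℂ), (0 : ℂ)) 0 :=
      HasDerivAt.prodMk (hasDerivAt_id (0:ℂ)) (hasDerivAt_const (0:ℂ) (0:ℂ))
    simpa [Function.comp_def] using hL.comp_hasDerivAt_of_eq 0 h' rfl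
  have hL10 : L (1, 0) = 1 := by
    have heq : (fun w : ℂ => w) =ᶠ[nhds (0:ℂ)] fun w : ℂ => H (w, 0) := by
      filter_upwards [hball] with w hw
      exact (h1 w hw).symm
    have hu' : HasDerivAt (fun w : ℂ => w) (L (1, 0)) 0 := hu.congr_of_eventuallyEq heq
    exact hu'.unique (hasDerivAt_id 0)
  -- L (0,1) = 0
  have hv : HasDerivAt (fun w : ℂ => H (0, w)) (L (0, 1)) 0 := by
    have h' : HasDerivAt (fun w : ℂ => ((0, w) : ℂ × ℂ)) ((0 : ℂ), (1 : ℂ)) 0 :=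
      HasDerivAt.prodMk (hasDerivAt_const (0:ℂ) (0:ℂ)) (hasDerivAt_id (0:ℂ))
    simpa [Function.comp_def] using hL.comp_hasDerivAt_of_eq 0 h' rfl
  have hL01 : L (0, 1) = 0 := by
    have heq : (fun _ : ℂ => (0 : ℂ)) =ᶠ[nhds (0:ℂ)] fun w : ℂ => H (0, w) := by
      filter_upwards [hball] with w hw
      exact (h2 w hw).symm
    have hv' : HasDerivAt (fun _ : ℂ => (0 : ℂ)) (L (0, 1)) 0 := hv.congr_of_eventuallyEq heq
    exact hv'.unique (hasDerivAt_const 0 0)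
  -- L (1,1) = 0 from vanishing on the diagonal
  have hd : HasDerivAt (fun w : ℂ => H (w, w)) (L (1, 1)) 0 := by
    have h' : HasDerivAt (fun w : ℂ => ((w, w) : ℂ × ℂ)) ((1 : ℂ), (1 : ℂ)) 0 :=
      HasDerivAt.prodMk (hasDerivAt_id (0:ℂ)) (hasDerivAt_id (0:ℂ))
    simpa [Function.comp_def] using hL.comp_hasDerivAt_of_eq 0 h' rfl
  have hL11 : L (1, 1) = 0 := by
    have heq : (fun _ : ℂ => (0 : ℂ)) =ᶠ[nhds (0:ℂ)] fun w : ℂ => H (w, w) := by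
      filter_upwards [hball] with w hw
      exact (hdiag w hw).symm
    have hd' : HasDerivAt (fun _ : ℂ => (0 : ℂ)) (L (1, 1)) 0 := hd.congr_of_eventuallyEq heq
    exact hd'.unique (hasDerivAt_const 0 0)
  have hadd : L (1, 1) = L (1, 0) + L (0, 1) := by
    rw [← map_add]
    norm_num
  rw [hL11, hL10, hL01] at hadd
  simp at hadd
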